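/- Let (P,r) be any finite MDP, let π* be a Blackwell-optimal policy with gain ρ* = ρ^{π*} and bias h* = h^{π*} (so that P_{π*}ρ* = ρ* and ρ* + h* = r_{π*} + P_{π*}h*). Then for every discount γ ∈ (0,1), ||V_γ^{π*} − (1/(1−γ))·ρ*||_∞ ≤ sp(h*). -/

import Mathlib

open Filter Matrix MeasureTheory
open scoped BigOperators ENNReal

namespace PaperMDP

variable {S A : Type*}

section Core

variable [Fintype S] [Fintype A] [DecidableEq S] [Nonempty S] [Nonempty A]

/-- `p` is a transition probability kernel on `S × A`. -/
def IsKernel (p : S → A → S → ℝ) : Prop :=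
  ∀ s a, (∀ s', 0 ≤ p s a s') ∧ (∑ s', p s a s') = 1

/-- `pol` is a stationary Markov (randomized) policy. -/
def IsPolicy (pol : S → A → ℝ) : Prop :=
  ∀ s, (∀ a, 0 ≤ pol s a) ∧ (∑ a, pol s a) = 1

/-- Transition matrix `P_π` induced by a policy. -/
def polMat (p : S → A → S → ℝ) (pol : S → A → ℝ) : Matrix S S ℝ :=
  Matrix.of fun s s' => ∑ a, pol s a * p s a s'

/-- Reward vector `r_π` induced by a policy. -/
def polRew (r : S → A → ℝ) (pol : S → A → ℝ) : S → ℝ := fun s => ∑ a, pol s a * r s a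

/-- The deterministic policy induced by `d : S → A`, viewed as a randomized policy. -/
def detPol [DecidableEq A] (d : S → A) : S → A → ℝ := fun s a => if a = d s then 1 else 0

/-- `(I - γ M)⁻¹ v = ∑_{t ≥ 0} γ^t M^t v` (Neumann series). -/
noncomputable def resApply (γ : ℝ) (M : Matrix S S ℝ) (v : S → ℝ) : S → ℝ :=
  ∑' t : ℕ, γ ^ t • (M ^ t *ᵥ v)

/-- Discounted value function `V_γ^π`. -/
noncomputable def dval (p : S → A → S → ℝ) (r : S → A → ℝ) (γ : ℝ) (pol : S → A → ℝ) :
    S → ℝ :=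
  resApply γ (polMat p pol) (polRew r pol)

/-- Optimal discounted value function `V_γ^*`. -/
noncomputable def dvalStar (p : S → A → S → ℝ) (r : S → A → ℝ) (γ : ℝ) : S → ℝ := fun s =>
  ⨆ q : {q : S → A → ℝ // IsPolicy q}, dval p r γ q.1 s

/-- `pol` is an optimal policy for the `γ`-discounted MDP `(p, r, γ)`. -/
def DiscountedOptimal (p : S → A → S → ℝ) (r : S → A → ℝ) (γ : ℝ) (pol : S → A → ℝ) :
    Prop :=
  IsPolicy pol ∧ ∀ q : S → A → ℝ, IsPolicy q → ∀ s, dval p r γ q s ≤ dval p r γ pol s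

/-- Cesàro limit of a sequence of vectors. -/
noncomputable def cesaro (f : ℕ → S → ℝ) : S → ℝ :=
  limUnder atTop fun N : ℕ => (N : ℝ)⁻¹ • ∑ T ∈ Finset.range N, f T

/-- The gain (long-run average reward) `ρ^π`. -/
noncomputable def gain (p : S → A → S → ℝ) (r : S → A → ℝ) (pol : S → A → ℝ) : S → ℝ :=
  cesaro fun t => (polMat p pol ^ t) *ᵥ polRew r pol

/-- The bias function `h^π`. -/
noncomputable def bias (p : S → A → S → ℝ) (r : S → A → ℝ) (pol : S → A → ℝ) : S → ℝ :=
  cesaro fun T => ∑ t ∈ Finset.range T, ((polMat p pol ^ t) *ᵥ polRew r pol - gain p r pol)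

/-- Blackwell optimality of a policy. -/
def Blackwell (p : S → A → S → ℝ) (r : S → A → ℝ) (pol : S → A → ℝ) : Prop :=
  IsPolicy pol ∧ ∃ γ₀ ∈ Set.Ioo (0 : ℝ) 1, ∀ γ ∈ Set.Ico γ₀ 1,
    ∀ q : S → A → ℝ, IsPolicy q → ∀ s, dval p r γ q s ≤ dval p r γ pol s

/-- The optimal gain `ρ^*(s) = sup_π ρ^π(s)`. -/
noncomputable def gainStar (p : S → A → S → ℝ) (r : S → A → ℝ) : S → ℝ := fun s =>
  ⨆ q : {q : S → A → ℝ // IsPolicy q}, gain p r q.1 s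

/-- Span seminorm `sp(v) = max v - min v`. -/
noncomputable def span (v : S → ℝ) : ℝ := (⨆ s, v s) - (⨅ s, v s)

/-- `s'` is reachable from `s` in the Markov chain with transition matrix `M`. -/
def Reaches (M : Matrix S S ℝ) (s s' : S) : Prop := ∃ t : ℕ, 0 < (M ^ t) s s'

/-- A state of a finite Markov chain is recurrent iff its communicating class is closed. -/
def Recurrent (M : Matrix S S ℝ) (s : S) : Prop := ∀ s', Reaches M s s' → Reaches M s' s

/-- Weakly communicating MDP. -/
def WeaklyCommunicating (p : S → A → S → ℝ) : Prop :=
  ∃ S1 : Set S,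
    (∀ s ∈ S1, ∀ pol : S → A → ℝ, IsPolicy pol → ¬Recurrent (polMat p pol) s) ∧
    ∀ s ∉ S1, ∀ s' ∉ S1, ∃ pol : S → A → ℝ, IsPolicy pol ∧ Reaches (polMat p pol) s s'

/-- The probability that the chain `M` started at `s` is in a transient state at time `t`.
For a finite chain, `E_s[T_{R}] = ∑_{t} transientMass M s t`, since the set of recurrent
states is closed. -/
noncomputable def transientMass (M : Matrix S S ℝ) (s : S) (t : ℕ) : ℝ :=
  ∑ s', Set.indicator {x : S | ¬Recurrent M x} (fun x => (M ^ t) s x) s'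

/-- The bounded transient time property with parameter `B`:
`E_s^π[T_{R^π}] ≤ B` for every deterministic stationary policy and every state. -/
def BoundedTransientTime [DecidableEq A] (p : S → A → S → ℝ) (B : ℝ) : Prop :=
  ∀ (d : S → A) (s : S) (n : ℕ),
    (∑ t ∈ Finset.range n, transientMass (polMat p (detPol d)) s t) ≤ B

/-- One-step variance vector `𝕍_{P}[V]`. -/
noncomputable def oneStepVar (M : Matrix S S ℝ) (V : S → ℝ) : S → ℝ := fun s =>
  ∑ s', M s s' * (V s' - (M *ᵥ V) s) ^ 2

/-- Probability of the path `(S_0, …, S_T) = path` for the chain `M` started at `s`. -/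
noncomputable def pathProb (M : Matrix S S ℝ) (s : S) {T : ℕ} (path : Fin (T + 1) → S) : ℝ :=
  (if path 0 = s then 1 else 0) * ∏ i : Fin T, M (path i.castSucc) (path i.succ)

/-- Expectation of a function of `(S_0, …, S_T)` for the chain `M` started at `s`. -/
noncomputable def pathExp (M : Matrix S S ℝ) (s : S) (T : ℕ) (f : (Fin (T + 1) → S) → ℝ) :
    ℝ :=
  ∑ path : Fin (T + 1) → S, pathProb M s path * f path

/-- Variance of a function of `(S_0, …, S_T)` for the chain `M` started at `s`. -/
noncomputable def pathVar (M : Matrix S S ℝ) (s : S) (T : ℕ) (f : (Fin (T + 1) → S) → ℝ) :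
    ℝ :=
  pathExp M s T fun path => (f path - pathExp M s T f) ^ 2

/-- Variance of the infinite-horizon discounted return, `𝕍_s^π[∑_{t} γ^t R_t]`,
as the limit of the variances of the truncated returns. -/
noncomputable def returnVar (M : Matrix S S ℝ) (rv : S → ℝ) (γ : ℝ) : S → ℝ := fun s =>
  limUnder atTop fun T : ℕ =>
    pathVar M s T fun path => ∑ t : Fin (T + 1), γ ^ (t : ℕ) * rv (path t)

end Core

set_option linter.unusedSectionVars false

open Topology

section Aux
variable {S : Type*} [Fintype S] [DecidableEq S] [Nonempty S]


/-- A (row-)stochastic matrix. -/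
def IsStoch (P : Matrix S S ℝ) : Prop := (∀ i j, 0 ≤ P i j) ∧ ∀ i, ∑ j, P i j = 1

lemma IsStoch.one : IsStoch (1 : Matrix S S ℝ) := by
  constructor
  · intro i j
    by_cases h : i = j <;> simp [Matrix.one_apply, h]
  · intro i; simp [Matrix.one_apply]

lemma IsStoch.mul {P Q : Matrix S S ℝ} (hP : IsStoch P) (hQ : IsStoch Q) : IsStoch (P * Q) := by
  constructor
  · intro i j
    rw [Matrix.mul_apply]
    exact Finset.sum_nonneg fun k _ => mul_nonneg (hP.1 i k) (hQ.1 k j)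
  · intro i
    simp only [Matrix.mul_apply]
    rw [Finset.sum_comm]
    calc ∑ k, ∑ j, P i k * Q k j = ∑ k, P i k * ∑ j, Q k j := by
          simp [Finset.mul_sum]
      _ = 1 := by simp [hQ.2, hP.2 i]

lemma IsStoch.pow {P : Matrix S S ℝ} (hP : IsStoch P) (n : ℕ) : IsStoch (P ^ n) := by
  induction n with
  | zero => simpa using IsStoch.one
  | succ n ih => rw [pow_succ]; exact ih.mul hP

lemma IsStoch.entry_le_one {P : Matrix S S ℝ} (hP : IsStoch P) (i j : S) : P i j ≤ 1 := by
  calc P i j ≤ ∑ k, P i k := Finset.single_le_sum (fun k _ => hP.1 i k) (Finset.mem_univ j)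
    _ = 1 := hP.2 i

lemma IsStoch.mulVec_le {P : Matrix S S ℝ} (hP : IsStoch P) (v : S → ℝ) (i : S) :
    (P *ᵥ v) i ≤ ⨆ s, v s := by
  have hb : BddAbove (Set.range v) := (Set.finite_range v).bddAbove
  calc (P *ᵥ v) i = ∑ j, P i j * v j := rfl
    _ ≤ ∑ j, P i j * (⨆ s, v s) :=
        Finset.sum_le_sum fun j _ => mul_le_mul_of_nonneg_left (le_ciSup hb j) (hP.1 i j)
    _ = ⨆ s, v s := by rw [← Finset.sum_mul, hP.2 i, one_mul]

lemma IsStoch.le_mulVec {P : Matrix S S ℝ} (hP : IsStoch P) (v : S → ℝ) (i : S) :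
    (⨅ s, v s) ≤ (P *ᵥ v) i := by
  have hb : BddBelow (Set.range v) := (Set.finite_range v).bddBelow
  calc (⨅ s, v s) = ∑ j, P i j * (⨅ s, v s) := by rw [← Finset.sum_mul, hP.2 i, one_mul]
    _ ≤ ∑ j, P i j * v j :=
        Finset.sum_le_sum fun j _ => mul_le_mul_of_nonneg_left (ciInf_le hb j) (hP.1 i j)
    _ = (P *ᵥ v) i := rfl

lemma IsStoch.norm_mulVec_le {P : Matrix S S ℝ} (hP : IsStoch P) (v : S → ℝ) :
    ‖P *ᵥ v‖ ≤ ‖v‖ := by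
  rw [pi_norm_le_iff_of_nonneg (norm_nonneg v)]
  intro i
  rw [Real.norm_eq_abs, abs_le]
  constructor
  · calc -‖v‖ = ∑ j, P i j * (-‖v‖) := by rw [← Finset.sum_mul, hP.2 i, one_mul]
      _ ≤ ∑ j, P i j * v j := Finset.sum_le_sum fun j _ =>
          mul_le_mul_of_nonneg_left (neg_le_of_abs_le (by simpa [Real.norm_eq_abs] using norm_le_pi_norm v j)) (hP.1 i j)
      _ = (P *ᵥ v) i := rfl
  · calc (P *ᵥ v) i = ∑ j, P i j * v j := rfl
      _ ≤ ∑ j, P i j * ‖v‖ := Finset.sum_le_sum fun j _ =>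
          mul_le_mul_of_nonneg_left (le_of_abs_le (by simpa [Real.norm_eq_abs] using norm_le_pi_norm v j)) (hP.1 i j)
      _ = ‖v‖ := by rw [← Finset.sum_mul, hP.2 i, one_mul]



lemma matTendsto_iff {f : ℕ → Matrix S S ℝ} {M : Matrix S S ℝ} :
    Tendsto f atTop (𝓝 M) ↔ ∀ i j, Tendsto (fun n => f n i j) atTop (𝓝 (M i j)) := by
  constructor
  · intro h i j
    have h1 : Continuous fun N : Matrix S S ℝ => N i j := continuous_apply_apply i j
    exact (h1.tendsto M).comp h
  · intro h
    have : Tendsto (fun n => (f n : S → S → ℝ)) atTop (𝓝 (M : S → S → ℝ)) := by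
      apply tendsto_pi_nhds.mpr
      intro i
      rw [tendsto_pi_nhds]
      exact h i
    exact this

/-- Cesàro averages of powers of a matrix. -/
noncomputable def cesMat (P : Matrix S S ℝ) (N : ℕ) : Matrix S S ℝ :=
  (N : ℝ)⁻¹ • ∑ T ∈ Finset.range N, P ^ T

lemma cesMat_mem {P : Matrix S S ℝ} (hP : IsStoch P) (N : ℕ) (i j : S) :
    cesMat P N i j ∈ Set.Icc (-1 : ℝ) 1 := by
  have hsum : (∑ T ∈ Finset.range N, P ^ T) i j = ∑ T ∈ Finset.range N, (P ^ T) i j :=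
    Matrix.sum_apply i j _ _
  constructor
  · have h0 : 0 ≤ cesMat P N i j := by
      rw [cesMat, Matrix.smul_apply, hsum]
      exact mul_nonneg (by positivity) (Finset.sum_nonneg fun T _ => (hP.pow T).1 i j)
    linarith
  · rw [cesMat, Matrix.smul_apply, hsum]
    rcases Nat.eq_zero_or_pos N with h | h
    · simp [h]
    · have h1 : ∑ T ∈ Finset.range N, (P ^ T) i j ≤ N := by
        calc ∑ T ∈ Finset.range N, (P ^ T) i j ≤ ∑ T ∈ Finset.range N, 1 :=
              Finset.sum_le_sum fun T _ => (hP.pow T).entry_le_one i j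
          _ = N := by simp
      have h2 : (0:ℝ) < N := by exact_mod_cast h
      rw [smul_eq_mul]
      calc (N:ℝ)⁻¹ * ∑ T ∈ Finset.range N, (P ^ T) i j ≤ (N:ℝ)⁻¹ * N :=
            mul_le_mul_of_nonneg_left h1 (by positivity)
        _ = 1 := by field_simp

lemma mul_cesMat_sub {P : Matrix S S ℝ} (N : ℕ) :
    P * cesMat P N - cesMat P N = (N : ℝ)⁻¹ • (P ^ N - 1) := by
  rw [cesMat, Matrix.mul_smul, ← smul_sub, Finset.mul_sum]
  congr 1
  rw [← Finset.sum_sub_distrib]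
  have : ∀ T, P * P ^ T - P ^ T = P ^ (T+1) - P ^ T := by
    intro T; rw [← pow_succ']
  simp_rw [this]
  rw [Finset.sum_range_sub (f := fun T => P ^ T)]
  simp

lemma cesMat_mul_sub {P : Matrix S S ℝ} (N : ℕ) :
    cesMat P N * P - cesMat P N = (N : ℝ)⁻¹ • (P ^ N - 1) := by
  rw [cesMat, Matrix.smul_mul, ← smul_sub, Finset.sum_mul]
  congr 1
  rw [← Finset.sum_sub_distrib]
  have : ∀ T, P ^ T * P - P ^ T = P ^ (T+1) - P ^ T := by
    intro T; rw [← pow_succ]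
  simp_rw [this]
  rw [Finset.sum_range_sub (f := fun T => P ^ T)]
  simp

lemma tendsto_inv_smul_pow_sub {P : Matrix S S ℝ} (hP : IsStoch P) :
    Tendsto (fun N : ℕ => (N : ℝ)⁻¹ • (P ^ N - 1)) atTop (𝓝 0) := by
  rw [matTendsto_iff]
  intro i j
  have hz : (0 : Matrix S S ℝ) i j = 0 := rfl
  rw [hz]
  have htend : Tendsto (fun N : ℕ => 2 * (N:ℝ)⁻¹) atTop (𝓝 (0:ℝ)) := by
    have h : Tendsto (fun n : ℕ => (n:ℝ)⁻¹) atTop (𝓝 (0:ℝ)) :=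
      tendsto_inv_atTop_zero.comp tendsto_natCast_atTop_atTop
    simpa using h.const_mul (2:ℝ)
  refine squeeze_zero_norm (fun N => ?_) htend
  · have hb : |(P ^ N - 1) i j| ≤ 2 := by
      have h1 : (P ^ N - 1) i j = (P ^ N) i j - (1 : Matrix S S ℝ) i j := rfl
      have h2 : (0:ℝ) ≤ (P ^ N) i j := (hP.pow N).1 i j
      have h3 : (P ^ N) i j ≤ 1 := (hP.pow N).entry_le_one i j
      have h4 : (0:ℝ) ≤ (1 : Matrix S S ℝ) i j := IsStoch.one.1 i j
      have h5 : (1 : Matrix S S ℝ) i j ≤ 1 := IsStoch.one.entry_le_one i j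
      rw [h1, abs_le]; constructor <;> linarith
    rw [Real.norm_eq_abs, Matrix.smul_apply, smul_eq_mul, abs_mul, abs_inv, Nat.abs_cast]
    have hNn : (0:ℝ) ≤ ((N:ℕ):ℝ)⁻¹ := by positivity
    rw [mul_comm]
    exact mul_le_mul_of_nonneg_right hb hNn

local instance matFC : FirstCountableTopology (Matrix S S ℝ) :=
  inferInstanceAs (FirstCountableTopology (S → S → ℝ))

lemma pow_mul_fix {P Q' : Matrix S S ℝ} (h : P * Q' = Q') (t : ℕ) : P ^ t * Q' = Q' := by
  induction t with
  | zero => simp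
  | succ t ih => rw [pow_succ', mul_assoc, ih, h]

lemma fix_mul_pow {P Q' : Matrix S S ℝ} (h : Q' * P = Q') (t : ℕ) : Q' * P ^ t = Q' := by
  induction t with
  | zero => simp
  | succ t ih => rw [pow_succ, ← mul_assoc, ih, h]

lemma cesMat_mul_fix {P Q' : Matrix S S ℝ} (h : P * Q' = Q') {N : ℕ} (hN : 1 ≤ N) :
    cesMat P N * Q' = Q' := by
  rw [cesMat, Matrix.smul_mul, Finset.sum_mul]
  have : ∀ T ∈ Finset.range N, P ^ T * Q' = Q' := fun T _ => pow_mul_fix h T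
  rw [Finset.sum_congr rfl this, Finset.sum_const, Finset.card_range,
    ← Nat.cast_smul_eq_nsmul ℝ, smul_smul, inv_mul_cancel₀, one_smul]
  exact_mod_cast Nat.one_le_iff_ne_zero.mp hN

lemma fix_mul_cesMat {P Q' : Matrix S S ℝ} (h : Q' * P = Q') {N : ℕ} (hN : 1 ≤ N) :
    Q' * cesMat P N = Q' := by
  rw [cesMat, Matrix.mul_smul, Finset.mul_sum]
  have : ∀ T ∈ Finset.range N, Q' * P ^ T = Q' := fun T _ => fix_mul_pow h T
  rw [Finset.sum_congr rfl this, Finset.sum_const, Finset.card_range,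
    ← Nat.cast_smul_eq_nsmul ℝ, smul_smul, inv_mul_cancel₀, one_smul]
  exact_mod_cast Nat.one_le_iff_ne_zero.mp hN

lemma exists_cesaro_limit {P : Matrix S S ℝ} (hP : IsStoch P) :
    ∃ Q : Matrix S S ℝ, Tendsto (cesMat P) atTop (𝓝 Q) ∧ P * Q = Q ∧ Q * P = Q ∧ Q * Q = Q := by
  set K : Set (Matrix S S ℝ) := {M | ∀ i j, M i j ∈ Set.Icc (-1:ℝ) 1} with hKdef
  have hK : IsCompact K := by
    have : K = Set.univ.pi fun _ : S => Set.univ.pi fun _ : S => Set.Icc (-1:ℝ) 1 := by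
      ext M
      constructor
      · exact fun h => Set.mem_univ_pi.2 fun i => Set.mem_univ_pi.2 fun j => h i j
      · exact fun h i j => Set.mem_univ_pi.1 (Set.mem_univ_pi.1 h i) j
    rw [this]
    exact isCompact_univ_pi fun i => isCompact_univ_pi fun j => isCompact_Icc
  have hmem : ∀ N, cesMat P N ∈ K := fun N i j => cesMat_mem hP N i j
  have key : ∀ u : ℕ → ℕ, Tendsto u atTop atTop → ∀ Q' : Matrix S S ℝ,
      Tendsto (fun k => cesMat P (u k)) atTop (𝓝 Q') → P * Q' = Q' ∧ Q' * P = Q' := by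
    intro u hu Q' hQ'
    have hc1 : Continuous fun M : Matrix S S ℝ => P * M - M :=
      (continuous_const.matrix_mul continuous_id).sub continuous_id
    have hc2 : Continuous fun M : Matrix S S ℝ => M * P - M :=
      (continuous_id.matrix_mul continuous_const).sub continuous_id
    have hz : Tendsto (fun k => ((u k : ℕ) : ℝ)⁻¹ • (P ^ (u k) - 1)) atTop
        (𝓝 (0 : Matrix S S ℝ)) := (tendsto_inv_smul_pow_sub hP).comp hu
    constructor
    · have h1 : Tendsto (fun k => P * cesMat P (u k) - cesMat P (u k)) atTop
          (𝓝 (P * Q' - Q')) := ((hc1.tendsto Q').comp hQ')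
      have h2 : Tendsto (fun k => P * cesMat P (u k) - cesMat P (u k)) atTop
          (𝓝 (0 : Matrix S S ℝ)) := by
        refine hz.congr fun k => ?_
        rw [mul_cesMat_sub]
      have := tendsto_nhds_unique h1 h2
      rwa [sub_eq_zero] at this
    · have h1 : Tendsto (fun k => cesMat P (u k) * P - cesMat P (u k)) atTop
          (𝓝 (Q' * P - Q')) := ((hc2.tendsto Q').comp hQ')
      have h2 : Tendsto (fun k => cesMat P (u k) * P - cesMat P (u k)) atTop
          (𝓝 (0 : Matrix S S ℝ)) := by
        refine hz.congr fun k => ?_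
        rw [cesMat_mul_sub]
      have := tendsto_nhds_unique h1 h2
      rwa [sub_eq_zero] at this
  obtain ⟨Q, hQK, φ, hφ, hφlim⟩ := hK.tendsto_subseq hmem
  have hφlim' : Tendsto (fun k => cesMat P (φ k)) atTop (𝓝 Q) := hφlim
  have hPQ := key φ hφ.tendsto_atTop Q hφlim'
  have hQQ : Q * Q = Q := by
    have ht : Tendsto (fun k => Q * cesMat P (φ k)) atTop (𝓝 (Q * Q)) :=
      ((continuous_const.matrix_mul continuous_id).tendsto Q).comp hφlim'
    have heq : ∀ᶠ k in atTop, Q * cesMat P (φ k) = Q := by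
      filter_upwards [hφ.tendsto_atTop.eventually_ge_atTop 1] with k hk
      exact fix_mul_cesMat hPQ.2 hk
    exact tendsto_nhds_unique (ht.congr' heq) tendsto_const_nhds
  refine ⟨Q, ?_, hPQ.1, hPQ.2, hQQ⟩
  refine tendsto_of_subseq_tendsto fun ns hns => ?_
  obtain ⟨Q', hQ'K, ψ, hψ, hψlim⟩ := hK.tendsto_subseq (fun n => hmem (ns n))
  have hψlim' : Tendsto (fun k => cesMat P (ns (ψ k))) atTop (𝓝 Q') := hψlim
  have hPQ' := key (fun n => ns (ψ n)) (hns.comp hψ.tendsto_atTop) Q' hψlim'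
  -- Q * Q' = Q'
  have e1 : Q * Q' = Q' := by
    have ht : Tendsto (fun k => cesMat P (φ k) * Q') atTop (𝓝 (Q * Q')) :=
      ((continuous_id.matrix_mul continuous_const).tendsto Q).comp hφlim'
    have heq : ∀ᶠ k in atTop, cesMat P (φ k) * Q' = Q' := by
      filter_upwards [hφ.tendsto_atTop.eventually_ge_atTop 1] with k hk
      exact cesMat_mul_fix hPQ'.1 hk
    exact tendsto_nhds_unique (ht.congr' heq) tendsto_const_nhds
  -- Q * Q' = Q
  have e2 : Q * Q' = Q := by
    have ht : Tendsto (fun k => Q * cesMat P (ns (ψ k))) atTop (𝓝 (Q * Q')) :=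
      ((continuous_const.matrix_mul continuous_id).tendsto Q').comp hψlim'
    have heq : ∀ᶠ k in atTop, Q * cesMat P (ns (ψ k)) = Q := by
      filter_upwards [(hns.comp hψ.tendsto_atTop).eventually_ge_atTop 1] with k hk
      exact fix_mul_cesMat hPQ.2 hk
    exact tendsto_nhds_unique (ht.congr' heq) tendsto_const_nhds
  have : Q' = Q := by rw [← e1, e2]
  exact ⟨ψ, by rw [← this]; exact hψlim'⟩

lemma sum_mulVec {ι : Type*} (s : Finset ι) (f : ι → Matrix S S ℝ) (v : S → ℝ) :
    (∑ i ∈ s, f i) *ᵥ v = ∑ i ∈ s, f i *ᵥ v := by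
  induction s using Finset.cons_induction with
  | empty => simp [Matrix.zero_mulVec]
  | cons a s ha ih => rw [Finset.sum_cons, Finset.sum_cons, Matrix.add_mulVec, ih]

lemma cesMat_mulVec_fix {P : Matrix S S ℝ} {z : S → ℝ} (h : P *ᵥ z = z) {N : ℕ} (hN : 1 ≤ N) :
    cesMat P N *ᵥ z = z := by
  have hpow : ∀ t : ℕ, P ^ t *ᵥ z = z := by
    intro t
    induction t with
    | zero => simp
    | succ t ih => rw [pow_succ', ← Matrix.mulVec_mulVec, ih, h]
  rw [cesMat, Matrix.smul_mulVec, sum_mulVec]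
  have : ∀ T ∈ Finset.range N, P ^ T *ᵥ z = z := fun T _ => hpow T
  rw [Finset.sum_congr rfl this, Finset.sum_const, Finset.card_range,
    ← Nat.cast_smul_eq_nsmul ℝ, smul_smul, inv_mul_cancel₀, one_smul]
  exact_mod_cast Nat.one_le_iff_ne_zero.mp hN

section Dev
variable {P Q : Matrix S S ℝ} (hP : IsStoch P)
  (hlim : Tendsto (cesMat P) atTop (𝓝 Q))
  (hPQ : P * Q = Q) (hQP : Q * P = Q) (hQQ : Q * Q = Q)

include hlim hPQ hQP hQQ in
lemma B_isUnit : IsUnit (1 - P + Q) := by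
  rw [← Matrix.mulVec_injective_iff_isUnit]
  have hz : ∀ z : S → ℝ, (1 - P + Q) *ᵥ z = 0 → z = 0 := by
    intro z hBz
    have hQB : Q * (1 - P + Q) = Q := by
      rw [Matrix.mul_add, Matrix.mul_sub, Matrix.mul_one, hQP, hQQ]
      abel
    have hQz : Q *ᵥ z = 0 := by
      have : Q *ᵥ ((1 - P + Q) *ᵥ z) = Q *ᵥ (0 : S → ℝ) := by rw [hBz]
      rwa [Matrix.mulVec_mulVec, hQB, Matrix.mulVec_zero] at this
    have hexp : (1 - P + Q) *ᵥ z = z - P *ᵥ z + Q *ᵥ z := by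
      rw [Matrix.add_mulVec, Matrix.sub_mulVec, Matrix.one_mulVec]
    rw [hexp, hQz, add_zero, sub_eq_zero] at hBz
    have hfix : ∀ᶠ N in atTop, cesMat P N *ᵥ z = z := by
      filter_upwards [eventually_ge_atTop 1] with N hN
      exact cesMat_mulVec_fix hBz.symm hN
    have ht : Tendsto (fun N => cesMat P N *ᵥ z) atTop (𝓝 (Q *ᵥ z)) :=
      ((continuous_id.matrix_mulVec continuous_const).tendsto Q).comp hlim
    have : Q *ᵥ z = z := tendsto_nhds_unique (ht.congr' hfix) tendsto_const_nhds
    rw [← this, hQz]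
  intro x y hxy
  have : (1 - P + Q) *ᵥ (x - y) = 0 := by
    rw [Matrix.mulVec_sub, hxy, sub_self]
  have := hz _ this
  exact sub_eq_zero.mp this

/-- Partial sums `S_T = ∑_{t<T} (P^t - Q)`. -/
noncomputable def devSum (P Q : Matrix S S ℝ) (T : ℕ) : Matrix S S ℝ :=
  ∑ t ∈ Finset.range T, (P ^ t - Q)

/-- Cesàro averages of the partial sums. -/
noncomputable def devCes (P Q : Matrix S S ℝ) (N : ℕ) : Matrix S S ℝ :=
  (N : ℝ)⁻¹ • ∑ T ∈ Finset.range N, devSum P Q T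

include hPQ hQP hQQ in
lemma devSum_mul_B (T : ℕ) : devSum P Q T * (1 - P + Q) = 1 - P ^ T := by
  have hQB : Q * (1 - P + Q) = Q := by
    rw [Matrix.mul_add, Matrix.mul_sub, Matrix.mul_one, hQP, hQQ]; abel
  have hPt : ∀ t : ℕ, (P ^ t - Q) * (1 - P + Q) = P ^ t - P ^ (t + 1) := by
    intro t
    rw [Matrix.sub_mul, hQB, Matrix.mul_add, Matrix.mul_sub, Matrix.mul_one,
      pow_mul_comm', ← pow_succ', pow_mul_fix hPQ]
    abel
  rw [devSum, Finset.sum_mul]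
  have : ∀ t ∈ Finset.range T, (P ^ t - Q) * (1 - P + Q) = P ^ t - P ^ (t+1) :=
    fun t _ => hPt t
  rw [Finset.sum_congr rfl this, Finset.sum_range_sub' (f := fun t => P ^ t)]
  simp

include hPQ hQP hQQ in
lemma devCes_mul_B {N : ℕ} (hN : 1 ≤ N) :
    devCes P Q N * (1 - P + Q) = 1 - cesMat P N := by
  rw [devCes, Matrix.smul_mul, Finset.sum_mul]
  have : ∀ T ∈ Finset.range N, devSum P Q T * (1 - P + Q) = 1 - P ^ T :=
    fun T _ => devSum_mul_B hPQ hQP hQQ T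
  rw [Finset.sum_congr rfl this, Finset.sum_sub_distrib, Finset.sum_const, Finset.card_range,
    smul_sub, cesMat, ← Nat.cast_smul_eq_nsmul ℝ, smul_smul, inv_mul_cancel₀, one_smul]
  exact_mod_cast Nat.one_le_iff_ne_zero.mp hN

include hP hlim hPQ hQP hQQ in
lemma tendsto_devCes :
    Tendsto (devCes P Q) atTop (𝓝 ((1 - Q) * (1 - P + Q)⁻¹)) := by
  have hdet : IsUnit (1 - P + Q).det :=
    (Matrix.isUnit_iff_isUnit_det _).mp (B_isUnit hlim hPQ hQP hQQ)
  have hBB : (1 - P + Q) * (1 - P + Q)⁻¹ = 1 := Matrix.mul_nonsing_inv _ hdet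
  have heq : ∀ᶠ N in atTop, devCes P Q N = (1 - cesMat P N) * (1 - P + Q)⁻¹ := by
    filter_upwards [eventually_ge_atTop 1] with N hN
    calc devCes P Q N = devCes P Q N * ((1 - P + Q) * (1 - P + Q)⁻¹) := by
          rw [hBB, Matrix.mul_one]
      _ = (devCes P Q N * (1 - P + Q)) * (1 - P + Q)⁻¹ := by rw [Matrix.mul_assoc]
      _ = (1 - cesMat P N) * (1 - P + Q)⁻¹ := by rw [devCes_mul_B hPQ hQP hQQ hN]
  have ht : Tendsto (fun N => (1 - cesMat P N) * (1 - P + Q)⁻¹) atTop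
      (𝓝 ((1 - Q) * (1 - P + Q)⁻¹)) :=
    (((continuous_const.sub continuous_id).matrix_mul continuous_const).tendsto Q).comp hlim
  exact ht.congr' (heq.mono fun N h => h.symm)

include hlim hPQ hQP hQQ in
lemma one_sub_P_mul_H :
    (1 - P) * ((1 - Q) * (1 - P + Q)⁻¹) = 1 - Q := by
  have hdet : IsUnit (1 - P + Q).det :=
    (Matrix.isUnit_iff_isUnit_det _).mp (B_isUnit hlim hPQ hQP hQQ)
  have hBB : (1 - P + Q) * (1 - P + Q)⁻¹ = 1 := Matrix.mul_nonsing_inv _ hdet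
  have h1 : (1 - P) * (1 - Q) = 1 - P := by
    simp only [Matrix.sub_mul, Matrix.mul_sub, Matrix.one_mul, Matrix.mul_one, hPQ]
    abel
  have hQB : Q * (1 - P + Q) = Q := by
    rw [Matrix.mul_add, Matrix.mul_sub, Matrix.mul_one, hQP, hQQ]; abel
  have hQBinv : Q * (1 - P + Q)⁻¹ = Q := by
    calc Q * (1 - P + Q)⁻¹ = (Q * (1 - P + Q)) * (1 - P + Q)⁻¹ := by rw [hQB]
      _ = Q * ((1 - P + Q) * (1 - P + Q)⁻¹) := by rw [Matrix.mul_assoc]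
      _ = Q := by rw [hBB, Matrix.mul_one]
  calc (1 - P) * ((1 - Q) * (1 - P + Q)⁻¹) = ((1 - P) * (1 - Q)) * (1 - P + Q)⁻¹ := by
        rw [Matrix.mul_assoc]
    _ = (1 - P) * (1 - P + Q)⁻¹ := by rw [h1]
    _ = ((1 - P + Q) - Q) * (1 - P + Q)⁻¹ := by congr 1; abel
    _ = (1 - P + Q) * (1 - P + Q)⁻¹ - Q * (1 - P + Q)⁻¹ := by rw [Matrix.sub_mul]
    _ = 1 - Q := by rw [hBB, hQBinv]

end Dev

end Aux


section Neumann
variable {S : Type*} [Fintype S] [DecidableEq S] [Nonempty S]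

lemma summable_geom_mulVec {γ : ℝ} (h0 : 0 ≤ γ) (h1 : γ < 1) {P : Matrix S S ℝ}
    (hP : IsStoch P) (v : S → ℝ) : Summable fun t : ℕ => γ ^ t • (P ^ t *ᵥ v) := by
  refine Summable.of_norm_bounded (g := fun t => γ ^ t * ‖v‖)
    ((summable_geometric_of_lt_one h0 h1).mul_right _) fun t => ?_
  rw [norm_smul, Real.norm_eq_abs, abs_pow, abs_of_nonneg h0]
  exact mul_le_mul_of_nonneg_left ((hP.pow t).norm_mulVec_le v) (by positivity)

lemma resApply_fixed {γ : ℝ} (h0 : 0 ≤ γ) (h1 : γ < 1) {P : Matrix S S ℝ}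
    (hP : IsStoch P) (v : S → ℝ) :
    resApply γ P v = v + γ • (P *ᵥ resApply γ P v) := by
  set g : ℕ → S → ℝ := fun t => γ ^ t • (P ^ t *ᵥ v) with hg
  have hs : Summable g := summable_geom_mulVec h0 h1 hP v
  have hzero : g 0 = v := by simp [hg]
  have hsucc : ∀ t, g (t + 1) = γ • (P *ᵥ g t) := by
    intro t
    rw [hg]
    simp only
    rw [Matrix.mulVec_smul, smul_smul, ← pow_succ', Matrix.mulVec_mulVec, ← pow_succ']
  let L : (S → ℝ) →L[ℝ] (S → ℝ) :=
    γ • (LinearMap.toContinuousLinearMap (Matrix.mulVecLin P))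
  have hL : ∀ x, L x = γ • (P *ᵥ x) := fun x => rfl
  have hmap : ∑' t, g (t + 1) = γ • (P *ᵥ ∑' t, g t) := by
    calc ∑' t, g (t + 1) = ∑' t, L (g t) := by
          refine tsum_congr fun t => ?_
          rw [hsucc t, hL]
      _ = L (∑' t, g t) := (L.map_tsum hs).symm
      _ = γ • (P *ᵥ ∑' t, g t) := hL _
  have h1' : resApply γ P v = ∑' t, g t := rfl
  rw [h1', ← h1']
  calc resApply γ P v = g 0 + ∑' t, g (t + 1) := Summable.tsum_eq_zero_add hs
    _ = v + γ • (P *ᵥ ∑' t, g t) := by rw [hzero, hmap]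
    _ = v + γ • (P *ᵥ resApply γ P v) := rfl

lemma fixed_unique {γ : ℝ} (h0 : 0 ≤ γ) (h1 : γ < 1) {P : Matrix S S ℝ}
    (hP : IsStoch P) {v x y : S → ℝ}
    (hx : x = v + γ • (P *ᵥ x)) (hy : y = v + γ • (P *ᵥ y)) : x = y := by
  by_contra hne
  have hd : x - y = γ • (P *ᵥ (x - y)) := by
    rw [Matrix.mulVec_sub, smul_sub]
    nth_rewrite 1 [hx, hy]
    abel
  have hpos : 0 < ‖x - y‖ := norm_pos_iff.mpr (sub_ne_zero.mpr hne)
  have hnorm : ‖x - y‖ ≤ γ * ‖x - y‖ := by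
    nth_rewrite 1 [hd]
    rw [norm_smul, Real.norm_eq_abs, abs_of_nonneg h0]
    exact mul_le_mul_of_nonneg_left (hP.norm_mulVec_le _) h0
  have : γ * ‖x - y‖ < 1 * ‖x - y‖ := mul_lt_mul_of_pos_right h1 hpos
  rw [one_mul] at this
  linarith

end Neumann

/-- For any finite MDP and any Blackwell-optimal policy `π^*` with gain
`ρ^*` and bias `h^*`, for every `γ ∈ (0,1)`:
`‖V_γ^{π^*} - (1/(1-γ))ρ^*‖_∞ ≤ sp(h^*)`. -/
theorem stmt14 {S A : Type*} [Fintype S] [Fintype A] [DecidableEq S] [DecidableEq A]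
    [Nonempty S] [Nonempty A]
    (p : S → A → S → ℝ) (hp : IsKernel p)
    (r : S → A → ℝ) (hr : ∀ s a, r s a ∈ Set.Icc (0 : ℝ) 1)
    (polB : S → A → ℝ) (hpolB : Blackwell p r polB)
    (γ : ℝ) (hγ : γ ∈ Set.Ioo (0 : ℝ) 1) :
    ‖dval p r γ polB - (1 - γ)⁻¹ • gain p r polB‖ ≤ span (bias p r polB) := by
  set P : Matrix S S ℝ := polMat p polB with hPdef
  set rπ : S → ℝ := polRew r polB with hrdef
  have hpol : IsPolicy polB := hpolB.1
  have hPst : IsStoch P := by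
    constructor
    · intro i j
      exact Finset.sum_nonneg fun a _ => mul_nonneg ((hpol i).1 a) ((hp i a).1 j)
    · intro i
      have : ∑ j, ∑ a, polB i a * p i a j = ∑ a, polB i a * ∑ j, p i a j :=
        (Finset.sum_comm).trans (by simp [Finset.mul_sum])
      calc ∑ j, P i j = ∑ j, ∑ a, polB i a * p i a j := rfl
        _ = ∑ a, polB i a * ∑ j, p i a j := this
        _ = ∑ a, polB i a := by
            refine Finset.sum_congr rfl fun a _ => ?_
            rw [(hp i a).2, mul_one]
        _ = 1 := (hpol i).2
  obtain ⟨Q, hlim, hPQ, hQP, hQQ⟩ := exists_cesaro_limit hPst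
  set ρ : S → ℝ := Q *ᵥ rπ with hρdef
  have hgain : gain p r polB = ρ := by
    rw [gain, cesaro]
    apply Filter.Tendsto.limUnder_eq
    have hcongr : ∀ N : ℕ, (N:ℝ)⁻¹ • ∑ T ∈ Finset.range N, (P ^ T *ᵥ rπ)
        = cesMat P N *ᵥ rπ := by
      intro N
      rw [cesMat, Matrix.smul_mulVec, sum_mulVec]
    exact (((continuous_id.matrix_mulVec continuous_const).tendsto Q).comp hlim).congr
      fun N => (hcongr N).symm
  set H : Matrix S S ℝ := (1 - Q) * (1 - P + Q)⁻¹ with hHdef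
  set h : S → ℝ := H *ᵥ rπ with hhdef
  have hbias : bias p r polB = h := by
    rw [bias, cesaro, hgain]
    apply Filter.Tendsto.limUnder_eq
    have hcongr : ∀ N : ℕ, (N:ℝ)⁻¹ • ∑ T ∈ Finset.range N,
        (∑ t ∈ Finset.range T, (P ^ t *ᵥ rπ - ρ)) = devCes P Q N *ᵥ rπ := by
      intro N
      rw [devCes, Matrix.smul_mulVec, sum_mulVec]
      congr 1
      refine Finset.sum_congr rfl fun T _ => ?_
      rw [devSum, sum_mulVec]
      refine Finset.sum_congr rfl fun t _ => ?_
      rw [Matrix.sub_mulVec]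
    exact (((continuous_id.matrix_mulVec continuous_const).tendsto H).comp
      (tendsto_devCes hPst hlim hPQ hQP hQQ)).congr fun N => (hcongr N).symm
  have hPoisson : h - P *ᵥ h = rπ - ρ := by
    have hkey : (1 - P) * H = 1 - Q := one_sub_P_mul_H hlim hPQ hQP hQQ
    calc h - P *ᵥ h = (1 - P) *ᵥ h := by rw [Matrix.sub_mulVec, Matrix.one_mulVec]
      _ = ((1 - P) * H) *ᵥ rπ := by rw [hhdef, Matrix.mulVec_mulVec]
      _ = (1 - Q) *ᵥ rπ := by rw [hkey]
      _ = rπ - ρ := by rw [Matrix.sub_mulVec, Matrix.one_mulVec]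
  have hPρ : P *ᵥ ρ = ρ := by rw [hρdef, Matrix.mulVec_mulVec, hPQ]
  have hγ0 : (0:ℝ) ≤ γ := hγ.1.le
  have hγ1 : γ < 1 := hγ.2
  have hγne : (1:ℝ) - γ ≠ 0 := by linarith
  set V : S → ℝ := dval p r γ polB with hVdef
  set W : S → ℝ := resApply γ P (P *ᵥ h) with hWdef
  have hVeq : V = rπ + γ • (P *ᵥ V) := resApply_fixed hγ0 hγ1 hPst rπ
  have hWeq : W = (P *ᵥ h) + γ • (P *ᵥ W) := resApply_fixed hγ0 hγ1 hPst (P *ᵥ h)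
  set u : S → ℝ := (1 - γ)⁻¹ • ρ + h - (1 - γ) • W with hu
  have hufix : u = rπ + γ • (P *ᵥ u) := by
    have hPu : P *ᵥ u = (1 - γ)⁻¹ • ρ + P *ᵥ h - (1 - γ) • (P *ᵥ W) := by
      rw [hu, Matrix.mulVec_sub, Matrix.mulVec_add, Matrix.mulVec_smul, Matrix.mulVec_smul, hPρ]
    have hgw : γ • (P *ᵥ W) = W - P *ᵥ h := by
      nth_rewrite 2 [hWeq]
      abel
    have hPh : P *ᵥ h = h - (rπ - ρ) := by rw [← hPoisson]; abel
    rw [hu, hPu, hPh]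
    rw [smul_sub, smul_add, smul_comm γ (1 - γ), hgw, hPh]
    match_scalars <;> field_simp <;> ring
  have hVu : V = u := fixed_unique hγ0 hγ1 hPst hVeq hufix
  have hdiff : V - (1 - γ)⁻¹ • ρ = h - (1 - γ) • W := by
    rw [hVu, hu]; abel
  rw [hgain, hbias, hdiff]
  -- final bound
  set m : ℝ := ⨅ s, h s with hm
  set M : ℝ := ⨆ s, h s with hM
  have hbddA : BddAbove (Set.range h) := (Set.finite_range h).bddAbove
  have hbddB : BddBelow (Set.range h) := (Set.finite_range h).bddBelow
  have hhs : ∀ s, m ≤ h s ∧ h s ≤ M := fun s => ⟨ciInf_le hbddB s, le_ciSup hbddA s⟩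
  have hspan : span h = M - m := rfl
  have hspan0 : 0 ≤ span h := by
    obtain ⟨s0⟩ := (inferInstance : Nonempty S)
    rw [hspan]
    linarith [(hhs s0).1, (hhs s0).2]
  rw [pi_norm_le_iff_of_nonneg hspan0]
  intro s
  -- pointwise value of W
  have hsumW : Summable fun t : ℕ => γ ^ t • (P ^ t *ᵥ (P *ᵥ h)) :=
    summable_geom_mulVec hγ0 hγ1 hPst (P *ᵥ h)
  have hWs : W s = ∑' t : ℕ, γ ^ t * (P ^ t *ᵥ (P *ᵥ h)) s := by
    rw [hWdef, resApply, tsum_apply hsumW]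
    rfl
  set c : ℕ → ℝ := fun t => (P ^ t *ᵥ (P *ᵥ h)) s with hc
  have hct : ∀ t : ℕ, m ≤ c t ∧ c t ≤ M := by
    intro t
    have he : c t = (P ^ (t+1) *ᵥ h) s := by
      rw [hc]
      simp only
      rw [Matrix.mulVec_mulVec, ← pow_succ]
    rw [he]
    exact ⟨(hPst.pow (t+1)).le_mulVec h s, (hPst.pow (t+1)).mulVec_le h s⟩
  have hsc : Summable fun t : ℕ => γ ^ t * c t := by
    refine Summable.of_norm_bounded (g := fun t => γ ^ t * (|m| + |M|))
      ((summable_geometric_of_lt_one hγ0 hγ1).mul_right _) fun t => ?_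
    rw [Real.norm_eq_abs, abs_mul, abs_pow, abs_of_nonneg hγ0]
    refine mul_le_mul_of_nonneg_left ?_ (by positivity)
    rw [abs_le]
    constructor
    · linarith [(hct t).1, neg_abs_le m, abs_nonneg M]
    · linarith [(hct t).2, le_abs_self M, abs_nonneg m]
  have hgeom : ∑' t : ℕ, γ ^ t = (1 - γ)⁻¹ := tsum_geometric_of_lt_one hγ0 hγ1
  have hWlb : (1 - γ)⁻¹ * m ≤ W s := by
    rw [hWs]
    calc (1 - γ)⁻¹ * m = ∑' t : ℕ, γ ^ t * m := by rw [tsum_mul_right, hgeom]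
      _ ≤ ∑' t : ℕ, γ ^ t * c t := by
          refine Summable.tsum_le_tsum (fun t => mul_le_mul_of_nonneg_left (hct t).1
            (by positivity)) (Summable.mul_right _
            (summable_geometric_of_lt_one hγ0 hγ1)) hsc
  have hWub : W s ≤ (1 - γ)⁻¹ * M := by
    rw [hWs]
    calc ∑' t : ℕ, γ ^ t * c t ≤ ∑' t : ℕ, γ ^ t * M := by
          refine Summable.tsum_le_tsum (fun t => mul_le_mul_of_nonneg_left (hct t).2
            (by positivity)) hsc (Summable.mul_right _
            (summable_geometric_of_lt_one hγ0 hγ1))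
      _ = (1 - γ)⁻¹ * M := by rw [tsum_mul_right, hgeom]
  have hγpos : (0:ℝ) < 1 - γ := by linarith
  have hml : m ≤ (1 - γ) * W s := by
    have := mul_le_mul_of_nonneg_left hWlb hγpos.le
    rw [← mul_assoc, mul_inv_cancel₀ hγne, one_mul] at this
    linarith
  have hmu : (1 - γ) * W s ≤ M := by
    have := mul_le_mul_of_nonneg_left hWub hγpos.le
    rw [← mul_assoc, mul_inv_cancel₀ hγne, one_mul] at this
    linarith
  have hentry : (h - (1 - γ) • W) s = h s - (1 - γ) * W s := rfl
  rw [Real.norm_eq_abs, hentry, hspan, abs_le]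
  exact ⟨by linarith [(hhs s).1, (hhs s).2], by linarith [(hhs s).1, (hhs s).2]⟩

end PaperMDP
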